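/- Transitivity of nominal equality: if ∇ ⊢ t₁ ≈ t₂ and ∇ ⊢ t₂ ≈ t₃ then ∇ ⊢ t₁ ≈ t₃. -/
import Mathlib


abbrev Atom := ℕ
abbrev Var := ℕ
abbrev Perm := List (Atom × Atom)

def swap (p : Atom × Atom) (a : Atom) : Atom :=
  if a = p.1 then p.2 else if a = p.2 then p.1 else a

def permAtom : Perm → Atom → Atom
  | [], a => a
  | p :: π, a => swap p (permAtom π a)

def ds (π π' : Perm) : Set Atom := {a | permAtom π a ≠ permAtom π' a}

inductive Trm : Type
  | unit : Trm
  | pair : Trm → Trm → Trm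
  | fn : ℕ → Trm → Trm
  | atom : Atom → Trm
  | abs : Atom → Trm → Trm
  | susp : Perm → Var → Trm

def permTrm (π : Perm) : Trm → Trm
  | .unit => .unit
  | .pair t₁ t₂ => .pair (permTrm π t₁) (permTrm π t₂)
  | .fn f t => .fn f (permTrm π t)
  | .atom a => .atom (permAtom π a)
  | .abs a t => .abs (permAtom π a) (permTrm π t)
  | .susp π' X => .susp (π ++ π') X

abbrev Env := Set (Atom × Var)

inductive fresh (Γ : Env) (a : Atom) : Trm → Prop
  | unit : fresh Γ a .unit
  | pair {t₁ t₂} : fresh Γ a t₁ → fresh Γ a t₂ → fresh Γ a (.pair t₁ t₂)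
  | fn {f t} : fresh Γ a t → fresh Γ a (.fn f t)
  | abs₁ {t} : fresh Γ a (.abs a t)
  | abs₂ {b t} : a ≠ b → fresh Γ a t → fresh Γ a (.abs b t)
  | atom {b} : a ≠ b → fresh Γ a (.atom b)
  | susp {π X} : (permAtom π.reverse a, X) ∈ Γ → fresh Γ a (.susp π X)

inductive equ (Γ : Env) : Trm → Trm → Prop
  | unit : equ Γ .unit .unit
  | pair {t₁ t₂ s₁ s₂} : equ Γ t₁ t₂ → equ Γ s₁ s₂ → equ Γ (.pair t₁ s₁) (.pair t₂ s₂)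
  | fn {f t₁ t₂} : equ Γ t₁ t₂ → equ Γ (.fn f t₁) (.fn f t₂)
  | abs₁ {a t₁ t₂} : equ Γ t₁ t₂ → equ Γ (.abs a t₁) (.abs a t₂)
  | abs₂ {a b t₁ t₂} : a ≠ b → fresh Γ a t₂ → equ Γ t₁ (permTrm [(a, b)] t₂) →
      equ Γ (.abs a t₁) (.abs b t₂)
  | atom {a} : equ Γ (.atom a) (.atom a)
  | susp {π π' X} : (∀ c ∈ ds π π', (c, X) ∈ Γ) → equ Γ (.susp π X) (.susp π' X)

inductive weak : Trm → Trm → Prop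
  | unit : weak .unit .unit
  | atom {a} : weak (.atom a) (.atom a)
  | fn {f t t'} : weak t t' → weak (.fn f t) (.fn f t')
  | pair {t₁ t₂ s₁ s₂} : weak t₁ s₁ → weak t₂ s₂ → weak (.pair t₁ t₂) (.pair s₁ s₂)
  | abs {a t t'} : weak t t' → weak (.abs a t) (.abs a t')
  | susp {π π' X} : ds π π' = ∅ → weak (.susp π X) (.susp π' X)

def subst (σ : Var → Option Trm) : Trm → Trm
  | .unit => .unit
  | .pair t₁ t₂ => .pair (subst σ t₁) (subst σ t₂)
  | .fn f t => .fn f (subst σ t)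
  | .atom a => .atom a
  | .abs a t => .abs a (subst σ t)
  | .susp π X =>
      match σ X with
      | some t => permTrm π t
      | none => .susp π X

section Aux

lemma swap_eval (a b x : Atom) : swap (a,b) x = if x = a then b else if x = b then a else x :=
  rfl

lemma swap_swap (p : Atom × Atom) (a : Atom) : swap p (swap p a) = a := by
  obtain ⟨x, y⟩ := p
  simp only [swap_eval]
  split_ifs <;> simp_all

lemma permAtom_append (π π' : Perm) (a : Atom) :
    permAtom (π ++ π') a = permAtom π (permAtom π' a) := by
  induction π with
  | nil => rfl
  | cons p π ih => simp [permAtom, ih]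

lemma permAtom_rev_cancel (π : Perm) (a : Atom) :
    permAtom π.reverse (permAtom π a) = a := by
  induction π generalizing a with
  | nil => rfl
  | cons p π ih =>
    simp only [List.reverse_cons, permAtom, permAtom_append]
    show permAtom π.reverse (permAtom [p] (swap p (permAtom π a))) = a
    simp only [permAtom, swap_swap]
    exact ih a

lemma permAtom_cancel_rev (π : Perm) (a : Atom) :
    permAtom π (permAtom π.reverse a) = a := by
  have := permAtom_rev_cancel π.reverse a
  rwa [List.reverse_reverse] at this

lemma permAtom_inj (π : Perm) {a b : Atom} (h : permAtom π a = permAtom π b) : a = b := by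
  have := congrArg (permAtom π.reverse) h
  rwa [permAtom_rev_cancel, permAtom_rev_cancel] at this

lemma permAtom_swap (π : Perm) (a b x : Atom) :
    permAtom π (swap (a,b) x) = swap (permAtom π a, permAtom π b) (permAtom π x) := by
  simp only [swap_eval]
  by_cases hxa : x = a
  · subst hxa; simp
  · by_cases hxb : x = b
    · subst hxb
      rw [if_neg hxa, if_pos rfl, if_neg (fun h => hxa (permAtom_inj π h)), if_pos rfl]
    · rw [if_neg hxa, if_neg hxb, if_neg (fun h => hxa (permAtom_inj π h)),
        if_neg (fun h => hxb (permAtom_inj π h))]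

lemma permAtom_rev_eq_of_eq {π π' : Perm} (h : ∀ x, permAtom π x = permAtom π' x)
    (a : Atom) : permAtom π.reverse a = permAtom π'.reverse a := by
  have h1 : permAtom π' (permAtom π.reverse a) = a := by
    rw [← h]; exact permAtom_cancel_rev π a
  have := congrArg (permAtom π'.reverse) h1
  rwa [permAtom_rev_cancel] at this

lemma permTrm_comp (π π' : Perm) (t : Trm) :
    permTrm π (permTrm π' t) = permTrm (π ++ π') t := by
  induction t with
  | unit => rfl
  | pair t₁ t₂ ih₁ ih₂ => simp [permTrm, ih₁, ih₂]
  | fn f t ih => simp [permTrm, ih]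
  | atom a => simp [permTrm, permAtom_append]
  | abs a t ih => simp [permTrm, ih, permAtom_append]
  | susp π₀ X => simp [permTrm]

lemma permTrm_nil (t : Trm) : permTrm [] t = t := by
  induction t <;> simp_all [permTrm, permAtom]

def sz : Trm → ℕ
  | .unit => 1
  | .pair t₁ t₂ => sz t₁ + sz t₂ + 1
  | .fn _ t => sz t + 1
  | .atom _ => 1
  | .abs _ t => sz t + 1
  | .susp _ _ => 1

lemma sz_perm (π : Perm) (t : Trm) : sz (permTrm π t) = sz t := by
  induction t <;> simp_all [permTrm, sz]

lemma weak_of_eqperm {π π' : Perm} (h : ∀ x, permAtom π x = permAtom π' x) (t : Trm) :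
    weak (permTrm π t) (permTrm π' t) := by
  induction t with
  | unit => exact weak.unit
  | pair t₁ t₂ ih₁ ih₂ => exact weak.pair ih₁ ih₂
  | fn f t ih => exact weak.fn ih
  | atom a =>
      show weak (.atom (permAtom π a)) (.atom (permAtom π' a))
      rw [h a]; exact weak.atom
  | abs a t ih =>
      show weak (.abs (permAtom π a) (permTrm π t)) (.abs (permAtom π' a) (permTrm π' t))
      rw [h a]; exact weak.abs ih
  | susp π₀ X =>
      apply weak.susp
      ext c
      simp only [ds, Set.mem_setOf_eq, Set.mem_empty_iff_false, iff_false, not_not]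
      rw [permAtom_append, permAtom_append, h]

lemma weak_eqperm {π π' : Perm} (hd : ds π π' = ∅) (x : Atom) :
    permAtom π x = permAtom π' x := by
  by_contra hx
  exact absurd (Set.eq_empty_iff_forall_notMem.mp hd x) (by simpa [ds] using hx)

lemma weak_perm {s s' : Trm} (π : Perm) (h : weak s s') : weak (permTrm π s) (permTrm π s') := by
  induction h with
  | unit => exact weak.unit
  | atom => exact weak.atom
  | fn _ ih => exact weak.fn ih
  | pair _ _ ih₁ ih₂ => exact weak.pair ih₁ ih₂
  | abs _ ih => exact weak.abs ih
  | susp hd =>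
      apply weak.susp
      ext c
      simp only [ds, Set.mem_setOf_eq, Set.mem_empty_iff_false, iff_false, not_not]
      rw [permAtom_append, permAtom_append, weak_eqperm hd]

lemma fresh_weak {Γ : Env} {a : Atom} {s s' : Trm} (hw : weak s s') (h : fresh Γ a s) :
    fresh Γ a s' := by
  induction hw with
  | unit => exact fresh.unit
  | atom => exact h
  | fn _ ih => cases h with | fn h => exact fresh.fn (ih h)
  | pair _ _ ih₁ ih₂ => cases h with | pair h₁ h₂ => exact fresh.pair (ih₁ h₁) (ih₂ h₂)
  | abs _ ih =>
      cases h with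
      | abs₁ => exact fresh.abs₁
      | abs₂ hne h => exact fresh.abs₂ hne (ih h)
  | @susp π π' X hd =>
      cases h with
      | susp hm =>
          apply fresh.susp
          rwa [← permAtom_rev_eq_of_eq (weak_eqperm hd)]

lemma equ_of_weak {Γ : Env} {t t' : Trm} (h : weak t t') : equ Γ t t' := by
  induction h with
  | unit => exact equ.unit
  | atom => exact equ.atom
  | fn _ ih => exact equ.fn ih
  | pair _ _ ih₁ ih₂ => exact equ.pair ih₁ ih₂
  | abs _ ih => exact equ.abs₁ ih
  | susp hd => exact equ.susp (fun c hc => absurd (weak_eqperm hd c) hc)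

lemma fresh_perm {Γ : Env} {a : Atom} {t : Trm} (π : Perm) (h : fresh Γ a t) :
    fresh Γ (permAtom π a) (permTrm π t) := by
  induction h with
  | unit => exact fresh.unit
  | pair _ _ ih₁ ih₂ => exact fresh.pair ih₁ ih₂
  | fn _ ih => exact fresh.fn ih
  | abs₁ => exact fresh.abs₁
  | abs₂ hne _ ih => exact fresh.abs₂ (fun he => hne (permAtom_inj π he)) ih
  | atom hne => exact fresh.atom (fun he => hne (permAtom_inj π he))
  | @susp π₀ X hm =>
      show fresh Γ (permAtom π a) (.susp (π ++ π₀) X)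
      refine fresh.susp ?_
      show (permAtom (π ++ π₀).reverse (permAtom π a), X) ∈ Γ
      rw [List.reverse_append, permAtom_append, permAtom_rev_cancel]
      exact hm

lemma fresh_perm_rev {Γ : Env} {a : Atom} {t : Trm} (π : Perm)
    (h : fresh Γ (permAtom π a) (permTrm π t)) : fresh Γ a t := by
  have h2 := fresh_perm π.reverse h
  rw [permAtom_rev_cancel, permTrm_comp] at h2
  refine fresh_weak ?_ h2
  have := weak_of_eqperm (π := π.reverse ++ π) (π' := []) (fun x => by
    simp [permAtom_append, permAtom_rev_cancel, permAtom]) t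
  rwa [permTrm_nil] at this

lemma equ_refl (Γ : Env) (t : Trm) : equ Γ t t := by
  induction t with
  | unit => exact equ.unit
  | pair _ _ ih₁ ih₂ => exact equ.pair ih₁ ih₂
  | fn _ _ ih => exact equ.fn ih
  | atom => exact equ.atom
  | abs _ _ ih => exact equ.abs₁ ih
  | susp π X => exact equ.susp (fun c hc => absurd rfl hc)

lemma equ_weak_trans {Γ : Env} {t s s' : Trm} (h : equ Γ t s) (hw : weak s s') :
    equ Γ t s' := by
  induction h generalizing s' with
  | unit => cases hw; exact equ.unit
  | pair _ _ ih₁ ih₂ => cases hw with | pair hw₁ hw₂ => exact equ.pair (ih₁ hw₁) (ih₂ hw₂)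
  | fn _ ih => cases hw with | fn hw => exact equ.fn (ih hw)
  | abs₁ _ ih => cases hw with | abs hw => exact equ.abs₁ (ih hw)
  | @abs₂ a b t₁ t₂ hne hf _ ih =>
      cases hw with
      | abs hw =>
          exact equ.abs₂ hne (fresh_weak hw hf) (ih (weak_perm [(a,b)] hw))
  | atom => cases hw; exact equ.atom
  | @susp π π' X hm =>
      cases hw with
      | susp hd =>
          apply equ.susp
          intro c hc
          apply hm
          simp only [ds, Set.mem_setOf_eq] at hc ⊢
          rwa [← weak_eqperm hd c] at hc

lemma equ_perm {Γ : Env} {s s' : Trm} (π : Perm) (h : equ Γ s s') :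
    equ Γ (permTrm π s) (permTrm π s') := by
  induction h with
  | unit => exact equ.unit
  | pair _ _ ih₁ ih₂ => exact equ.pair ih₁ ih₂
  | fn _ ih => exact equ.fn ih
  | abs₁ _ ih => exact equ.abs₁ ih
  | @abs₂ a b t₁ t₂ hne hf _ ih =>
      refine equ.abs₂ (fun he => hne (permAtom_inj π he)) (fresh_perm π hf) ?_
      rw [permTrm_comp] at ih
      refine equ_weak_trans ih ?_
      rw [show permTrm [(permAtom π a, permAtom π b)] (permTrm π t₂)
            = permTrm ([(permAtom π a, permAtom π b)] ++ π) t₂ from permTrm_comp _ _ _]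
      apply weak_of_eqperm
      intro x
      rw [permAtom_append]
      exact permAtom_swap π a b x
  | atom => exact equ.atom
  | @susp π₁ π₂ X hm =>
      apply equ.susp
      intro c hc
      apply hm
      simp only [ds, Set.mem_setOf_eq, permAtom_append] at hc ⊢
      exact fun he => hc (by rw [he])

lemma fresh_equ {Γ : Env} {a : Atom} {s s' : Trm} (h : equ Γ s s') (hf : fresh Γ a s) :
    fresh Γ a s' := by
  induction h with
  | unit => exact fresh.unit
  | pair _ _ ih₁ ih₂ => cases hf with | pair h₁ h₂ => exact fresh.pair (ih₁ h₁) (ih₂ h₂)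
  | fn _ ih => cases hf with | fn h => exact fresh.fn (ih h)
  | abs₁ _ ih =>
      cases hf with
      | abs₁ => exact fresh.abs₁
      | abs₂ hne h => exact fresh.abs₂ hne (ih h)
  | @abs₂ d e t t' hne hfd _ ih =>
      cases hf with
      | abs₁ =>
          exact fresh.abs₂ hne hfd
      | abs₂ had h =>
          rcases eq_or_ne a e with rfl | hae
          · exact fresh.abs₁
          · refine fresh.abs₂ hae ?_
            have h2 := ih h
            have hswap : a = permAtom [(d,e)] a := by
              show a = swap (d,e) a
              rw [swap_eval, if_neg had, if_neg hae]
            rw [hswap] at h2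
            exact fresh_perm_rev [(d,e)] h2
  | atom => exact hf
  | @susp π π' X hm =>
      cases hf with
      | susp hmem =>
          apply fresh.susp
          rcases eq_or_ne (permAtom π'.reverse a) (permAtom π.reverse a) with he | hne
          · rwa [he]
          · apply hm
            simp only [ds, Set.mem_setOf_eq]
            rw [permAtom_cancel_rev]
            intro hc
            exact hne (by
              have := congrArg (permAtom π.reverse) hc
              rwa [permAtom_rev_cancel] at this)

lemma equ_sz {Γ : Env} {s s' : Trm} (h : equ Γ s s') : sz s = sz s' := by
  induction h with
  | unit => rfl
  | pair _ _ ih₁ ih₂ => simp [sz, ih₁, ih₂]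
  | fn _ ih => simp [sz, ih]
  | abs₁ _ ih => simp [sz, ih]
  | abs₂ _ _ _ ih => simp only [sz]; rw [ih, sz_perm]
  | atom => rfl
  | susp _ => rfl

lemma fresh_swap_equ {Γ : Env} {a b : Atom} {t : Trm} (ha : fresh Γ a t)
    (hb : fresh Γ b t) : equ Γ (permTrm [(a,b)] t) t := by
  rcases eq_or_ne a b with rfl | hab
  · have hw := weak_of_eqperm (π := [(a,a)]) (π' := []) (fun x => by
      show swap (a,a) x = x
      rw [swap_eval]; split_ifs <;> simp_all) t
    rw [permTrm_nil] at hw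
    exact equ_of_weak hw
  · revert ha hb
    induction t with
    | unit => intro _ _; exact equ.unit
    | pair t₁ t₂ ih₁ ih₂ =>
        intro ha hb
        cases ha with | pair ha₁ ha₂ => cases hb with | pair hb₁ hb₂ =>
        exact equ.pair (ih₁ ha₁ hb₁) (ih₂ ha₂ hb₂)
    | fn f t ih =>
        intro ha hb
        cases ha with | fn ha => cases hb with | fn hb => exact equ.fn (ih ha hb)
    | atom c =>
        intro ha hb
        cases ha with | atom ha => cases hb with | atom hb =>
        have he : permTrm [(a,b)] (Trm.atom c) = Trm.atom c := by
          show Trm.atom (swap (a,b) c) = _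
          rw [swap_eval, if_neg (Ne.symm ha), if_neg (Ne.symm hb)]
        rw [he]; exact equ.atom
    | abs d s ih =>
        intro ha hb
        show equ Γ (.abs (swap (a,b) (permAtom [] d)) (permTrm [(a,b)] s)) (.abs d s)
        simp only [permAtom]
        rcases eq_or_ne a d with rfl | had
        · have hbs : fresh Γ b s := by
            cases hb with
            | abs₁ => exact absurd rfl hab
            | abs₂ _ h => exact h
          rw [show swap (a,b) a = b by rw [swap_eval]; simp]
          refine equ.abs₂ (Ne.symm hab) hbs ?_
          refine equ_of_weak (weak_of_eqperm (fun x => ?_) s)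
          show swap (a,b) x = swap (b,a) x
          rw [swap_eval, swap_eval]; split_ifs <;> simp_all
        · have has : fresh Γ a s := by
            cases ha with
            | abs₁ => exact absurd rfl had
            | abs₂ _ h => exact h
          rcases eq_or_ne b d with rfl | hbd
          · rw [show swap (a,b) b = a by rw [swap_eval]; split_ifs <;> simp_all]
            exact equ.abs₂ hab has (equ_refl Γ _)
          · have hbs : fresh Γ b s := by
              cases hb with
              | abs₁ => exact absurd rfl hbd
              | abs₂ _ h => exact h
            rw [show swap (a,b) d = d by
              rw [swap_eval, if_neg (Ne.symm had), if_neg (Ne.symm hbd)]]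
            exact equ.abs₁ (ih has hbs)
    | susp π X =>
        intro ha hb
        cases ha with | susp hma => cases hb with | susp hmb =>
        show equ Γ (.susp ((a,b) :: π) X) (.susp π X)
        apply equ.susp
        intro c hc
        simp only [ds, Set.mem_setOf_eq] at hc
        have hcc : permAtom π c = a ∨ permAtom π c = b := by
          by_contra hcon
          push_neg at hcon
          apply hc
          show swap (a,b) (permAtom π c) = permAtom π c
          rw [swap_eval, if_neg hcon.1, if_neg hcon.2]
        rcases hcc with he | he
        · have hce : c = permAtom π.reverse a := by
            rw [← he, permAtom_rev_cancel]
          rw [hce]; exact hma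
        · have hce : c = permAtom π.reverse b := by
            rw [← he, permAtom_rev_cancel]
          rw [hce]; exact hmb

end Aux

theorem equ_trans (Γ : Env) (t₁ t₂ t₃ : Trm)
    (h₁ : equ Γ t₁ t₂) (h₂ : equ Γ t₂ t₃) : equ Γ t₁ t₃ := by
  have key : ∀ n s₂ s₁ s₃, sz s₂ < n → equ Γ s₁ s₂ → equ Γ s₂ s₃ → equ Γ s₁ s₃ := by
    intro n
    induction n with
    | zero => intro _ _ _ hs _ _; omega
    | succ n ih =>
      intro s₂ s₁ s₃ hs h₁ h₂
      cases h₁ with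
      | unit => exact h₂
      | atom => exact h₂
      | pair ha hb =>
          cases h₂ with
          | pair hc hd =>
              simp only [sz] at hs
              exact equ.pair (ih _ _ _ (by omega) ha hc) (ih _ _ _ (by omega) hb hd)
      | fn ht =>
          cases h₂ with
          | fn ht' =>
              simp only [sz] at hs
              exact equ.fn (ih _ _ _ (by omega) ht ht')
      | @susp π π' X hm =>
          cases h₂ with
          | susp hm' =>
              apply equ.susp
              intro c hc
              by_cases he : permAtom π c = permAtom π' c
              · apply hm'
                simp only [ds, Set.mem_setOf_eq] at hc ⊢
                rwa [← he]
              · exact hm c he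
      | abs₁ ht =>
          simp only [sz] at hs
          cases h₂ with
          | abs₁ ht' => exact equ.abs₁ (ih _ _ _ (by omega) ht ht')
          | abs₂ hne hf ht' => exact equ.abs₂ hne hf (ih _ _ _ (by omega) ht ht')
      | @abs₂ a b u₁ u₂ hne hf ht =>
          simp only [sz] at hs
          cases h₂ with
          | abs₁ ht' =>
              refine equ.abs₂ hne (fresh_equ ht' hf) ?_
              exact ih _ _ _ (by rw [sz_perm]; omega) ht (equ_perm [(a,b)] ht')
          | @abs₂ _ c _ u₃ hbc hfb ht' =>
              have hszu₃ : sz u₃ = sz u₂ := by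
                have := equ_sz ht'
                rw [sz_perm] at this
                omega
              rcases eq_or_ne a c with rfl | hac
              · -- same outer binders: t₁ binder a, t₃ binder a
                apply equ.abs₁
                have h3 := equ_perm [(a,b)] ht'
                rw [permTrm_comp] at h3
                have hw : weak (permTrm ([(a,b)] ++ [(b,a)]) u₃) u₃ := by
                  have hww := weak_of_eqperm (π := [(a,b)] ++ [(b,a)]) (π' := [])
                    (fun x => by
                      show swap (a,b) (swap (b,a) x) = x
                      rw [swap_eval, swap_eval]
                      split_ifs <;> simp_all) u₃
                  rwa [permTrm_nil] at hww
                have h4 := equ_weak_trans h3 hw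
                exact ih _ _ _ (by rw [sz_perm]; omega) ht h4
              · have hau₃ : fresh Γ a u₃ := by
                  have h5 := fresh_equ ht' hf
                  have hid : a = permAtom [(b,c)] a := by
                    show a = swap (b,c) a
                    rw [swap_eval, if_neg hne, if_neg hac]
                  rw [hid] at h5
                  exact fresh_perm_rev [(b,c)] h5
                refine equ.abs₂ hac hau₃ ?_
                have h3 := equ_perm [(a,b)] ht'
                rw [permTrm_comp] at h3
                have hw : weak (permTrm ([(a,b)] ++ [(b,c)]) u₃)
                    (permTrm ([(a,c)] ++ [(a,b)]) u₃) := by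
                  apply weak_of_eqperm
                  intro x
                  show swap (a,b) (swap (b,c) x) = swap (a,c) (swap (a,b) x)
                  simp only [swap_eval]
                  split_ifs <;> simp_all
                have h4 := equ_weak_trans h3 hw
                rw [← permTrm_comp] at h4
                have h6 : equ Γ (permTrm [(a,b)] u₃) u₃ := fresh_swap_equ hau₃ hfb
                have h7 := equ_perm [(a,c)] h6
                have h8 := ih _ _ _ (by rw [sz_perm]; omega) ht h4
                exact ih _ _ _ (by rw [sz_perm, sz_perm]; omega) h8 h7
  exact key (sz t₂ + 1) t₂ t₁ t₃ (by omega) h₁ h₂
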